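/- For all integers a, b, c, d not all zero, F(a, b, c, d) ≥ 8 and F(a, b, c, d) ≡ 0 or 2 (mod 6). In particular, every value of F on a primitive integer vector lies in the Hassett subset ℋ. -/
import Mathlib


/-- The quaternary form `F(x,y,z,u) = 4(2x²+2y²+2z²−2xy−2xz+yz) + 2u(4u−x−y−z)`
over the integers. -/
def Fform (x y z u : ℤ) : ℤ :=
  4 * (2 * x ^ 2 + 2 * y ^ 2 + 2 * z ^ 2 - 2 * x * y - 2 * x * z + y * z) +
    2 * u * (4 * u - x - y - z)

/-- On any nonzero integer vector, `F` takes a value lying in the Hassett subset: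
`F(a,b,c,d) ≥ 8` and `F(a,b,c,d) ≡ 0` or `2 (mod 6)`. -/
theorem Fform_value_in_Hassett (a b c d : ℤ) (h : ¬(a = 0 ∧ b = 0 ∧ c = 0 ∧ d = 0)) :
    8 ≤ Fform a b c d ∧ (Fform a b c d % 6 = 0 ∨ Fform a b c d % 6 = 2) := by
  constructor
  · -- lower bound
    have key : 2 * (a ^ 2 + b ^ 2 + c ^ 2 + d ^ 2) ≤ Fform a b c d := by
      unfold Fform
      nlinarith [sq_nonneg (6 * a - 4 * b - 4 * c - d), sq_nonneg (10 * b - 2 * c - 5 * d),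
        sq_nonneg (8 * c - 5 * d), sq_nonneg d]
    by_cases hbig : 4 ≤ a ^ 2 + b ^ 2 + c ^ 2 + d ^ 2
    · linarith
    · push_neg at hbig
      have ha2 : a ^ 2 ≤ 3 := by nlinarith [sq_nonneg b, sq_nonneg c, sq_nonneg d]
      have hb2 : b ^ 2 ≤ 3 := by nlinarith [sq_nonneg a, sq_nonneg c, sq_nonneg d]
      have hc2 : c ^ 2 ≤ 3 := by nlinarith [sq_nonneg a, sq_nonneg b, sq_nonneg d]
      have hd2 : d ^ 2 ≤ 3 := by nlinarith [sq_nonneg a, sq_nonneg b, sq_nonneg c]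
      have ha : -1 ≤ a ∧ a ≤ 1 := by constructor <;> nlinarith
      have hb : -1 ≤ b ∧ b ≤ 1 := by constructor <;> nlinarith
      have hc : -1 ≤ c ∧ c ≤ 1 := by constructor <;> nlinarith
      have hd : -1 ≤ d ∧ d ≤ 1 := by constructor <;> nlinarith
      obtain ⟨ha1, ha2'⟩ := ha
      obtain ⟨hb1, hb2'⟩ := hb
      obtain ⟨hc1, hc2'⟩ := hc
      obtain ⟨hd1, hd2'⟩ := hd
      interval_cases a <;> interval_cases b <;> interval_cases c <;> interval_cases d <;>
        revert h <;> decide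
  · -- mod 6
    have hF : Fform a b c d =
        2 * (a + b + c + d) ^ 2 +
          6 * (a ^ 2 + b ^ 2 + c ^ 2 + d ^ 2 - 2 * a * b - 2 * a * c - a * d - b * d - c * d) := by
      unfold Fform; ring
    set s : ℤ := a + b + c + d with hs
    set k : ℤ := a ^ 2 + b ^ 2 + c ^ 2 + d ^ 2 - 2 * a * b - 2 * a * c - a * d - b * d - c * d
      with hk
    have h3 : s % 3 = 0 ∨ s % 3 = 1 ∨ s % 3 = 2 := by omega
    obtain ⟨t, ht⟩ : ∃ t, s = 3 * t + s % 3 := ⟨s / 3, by omega⟩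
    rcases h3 with h3 | h3 | h3 <;> rw [h3] at ht
    · have : Fform a b c d = 6 * (3 * t ^ 2 + k) := by rw [hF, ht]; ring
      omega
    · have : Fform a b c d = 6 * (3 * t ^ 2 + 2 * t + k) + 2 := by rw [hF, ht]; ring
      omega
    · have : Fform a b c d = 6 * (3 * t ^ 2 + 4 * t + 1 + k) + 2 := by rw [hF, ht]; ring
      omega
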